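/- The symmetric fat Cantor set 𝐂_α is quasi-dense: for every x ∈ 𝐂_α and every ε > 0, ℓ(𝐂_α ∩ (x−ε, x+ε)) > 0. -/

import Mathlib

open Filter Metric Topology MeasureTheory Set ENNReal

/-- The endpoints of the closed interval indexed by the binary string `s` at stage `n` of the
fat Cantor construction: at stage `n + 1`, from each of the `2 ^ n` current closed intervals we
remove the open subinterval of length `α n` centered at the middle of the interval. -/
noncomputable def cantorNode (α : ℕ → ℝ) : (n : ℕ) → (Fin n → Bool) → ℝ × ℝ
  | 0, _ => (0, 1)
  | n + 1, s =>
      let p := cantorNode α n (fun i => s i.castSucc)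
      if s (Fin.last n) then ((p.1 + p.2 + α n) / 2, p.2) else (p.1, (p.1 + p.2 - α n) / 2)

/-- The symmetric fat Cantor set associated to the sequence `α` of removed lengths. -/
noncomputable def fatCantor (α : ℕ → ℝ) : Set ℝ :=
  ⋂ n, ⋃ s : Fin n → Bool, Set.Icc (cantorNode α n s).1 (cantorNode α n s).2

namespace FatCantorAux

noncomputable def level (α : ℕ → ℝ) (n : ℕ) : Set ℝ :=
  ⋃ s : Fin n → Bool, Set.Icc (cantorNode α n s).1 (cantorNode α n s).2

lemma fatCantor_eq (α : ℕ → ℝ) : fatCantor α = ⋂ n, level α n := rfl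

lemma cantorNode_snoc (α : ℕ → ℝ) (n : ℕ) (s : Fin n → Bool) (b : Bool) :
    cantorNode α (n + 1) (Fin.snoc s b) =
      if b then (((cantorNode α n s).1 + (cantorNode α n s).2 + α n) / 2, (cantorNode α n s).2)
      else ((cantorNode α n s).1, ((cantorNode α n s).1 + (cantorNode α n s).2 - α n) / 2) := by
  simp only [cantorNode, Fin.snoc_last, Fin.snoc_castSucc]

lemma cantorNode_len (α : ℕ → ℝ) : ∀ (n : ℕ) (s : Fin n → Bool),
    (cantorNode α n s).2 - (cantorNode α n s).1
      = (1 - ∑ k ∈ Finset.range n, 2 ^ k * α k) / 2 ^ n := by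
  intro n
  induction n with
  | zero => intro s; simp [cantorNode]
  | succ n ih =>
    intro s
    have h := ih (fun i => s i.castSucc)
    set p := cantorNode α n (fun i => s i.castSucc) with hp
    have h2 : (2 : ℝ) ^ n ≠ 0 := by positivity
    simp only [cantorNode, ← hp, Finset.sum_range_succ]
    rcases Bool.dichotomy (s (Fin.last n)) with hb | hb <;> rw [hb] <;> simp <;>
      · field_simp at h ⊢
        ring_nf at h ⊢
        nlinarith [h]

lemma gap_bound (α : ℕ → ℝ) (hpos : ∀ n, 0 < α n) :
    ∀ (j n : ℕ) (s : Fin n → Bool),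
      volume (Icc (cantorNode α n s).1 (cantorNode α n s).2 \ level α (n + j))
        ≤ ENNReal.ofReal (∑ i ∈ Finset.range j, 2 ^ i * α (n + i)) := by
  intro j
  induction j with
  | zero =>
    intro n s
    have hsub : Icc (cantorNode α n s).1 (cantorNode α n s).2 ⊆ level α (n + 0) := by
      rw [Nat.add_zero]
      exact subset_iUnion
        (fun t : Fin n → Bool => Icc (cantorNode α n t).1 (cantorNode α n t).2) s
    rw [diff_eq_empty.2 hsub]
    simp
  | succ j ih =>
    intro n s
    set a := (cantorNode α n s).1 with ha
    set b := (cantorNode α n s).2 with hb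
    set c := (a + b - α n) / 2 with hc
    set d := (a + b + α n) / 2 with hd
    have hL : cantorNode α (n + 1) (Fin.snoc s false) = (a, c) := by
      rw [cantorNode_snoc]; simp; exact ⟨rfl, rfl⟩
    have hR : cantorNode α (n + 1) (Fin.snoc s true) = (d, b) := by
      rw [cantorNode_snoc]; simp; exact ⟨rfl, rfl⟩
    have hnj : n + (j + 1) = (n + 1) + j := by omega
    have hcover : Icc a b \ level α (n + (j + 1)) ⊆
        (Icc a c \ level α ((n + 1) + j)) ∪
          ((Icc d b \ level α ((n + 1) + j)) ∪ Ioo c d) := by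
      rw [hnj]
      rintro y ⟨hy, hyn⟩
      rcases le_or_gt y c with h1 | h1
      · exact Or.inl ⟨⟨hy.1, h1⟩, hyn⟩
      rcases le_or_gt d y with h2 | h2
      · exact Or.inr (Or.inl ⟨⟨h2, hy.2⟩, hyn⟩)
      · exact Or.inr (Or.inr ⟨h1, h2⟩)
    have hbound : volume (Icc a b \ level α (n + (j + 1))) ≤
        volume ((Icc a c \ level α ((n + 1) + j)) ∪
          ((Icc d b \ level α ((n + 1) + j)) ∪ Ioo c d)) := measure_mono hcover
    have hIL := ih (n + 1) (Fin.snoc s false)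
    have hIR := ih (n + 1) (Fin.snoc s true)
    rw [hL] at hIL
    rw [hR] at hIR
    have hIoo : volume (Ioo c d) = ENNReal.ofReal (α n) := by
      rw [Real.volume_Ioo]
      congr 1
      rw [hc, hd]; ring
    have hT' : (0 : ℝ) ≤ ∑ i ∈ Finset.range j, 2 ^ i * α ((n + 1) + i) := by
      apply Finset.sum_nonneg
      intro i _
      exact (mul_pos (by positivity) (hpos _)).le
    have hsum_eq : ∑ i ∈ Finset.range (j + 1), (2 : ℝ) ^ i * α (n + i)
        = (∑ i ∈ Finset.range j, 2 ^ i * α ((n + 1) + i))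
          + ((∑ i ∈ Finset.range j, 2 ^ i * α ((n + 1) + i)) + α n) := by
      rw [Finset.sum_range_succ']
      have : ∀ i ∈ Finset.range j, (2 : ℝ) ^ (i + 1) * α (n + (i + 1))
          = 2 ^ i * α ((n + 1) + i) + 2 ^ i * α ((n + 1) + i) := by
        intro i _
        have : n + (i + 1) = (n + 1) + i := by omega
        rw [this, pow_succ]
        ring
      rw [Finset.sum_congr rfl this, Finset.sum_add_distrib]
      simp
      ring
    calc volume (Icc a b \ level α (n + (j + 1)))
        ≤ volume ((Icc a c \ level α ((n + 1) + j)) ∪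
            ((Icc d b \ level α ((n + 1) + j)) ∪ Ioo c d)) := hbound
      _ ≤ volume (Icc a c \ level α ((n + 1) + j)) +
            (volume (Icc d b \ level α ((n + 1) + j)) + volume (Ioo c d)) := by
          refine (measure_union_le _ _).trans ?_
          gcongr
          exact measure_union_le _ _
      _ ≤ ENNReal.ofReal (∑ i ∈ Finset.range j, 2 ^ i * α ((n + 1) + i)) +
            (ENNReal.ofReal (∑ i ∈ Finset.range j, 2 ^ i * α ((n + 1) + i)) +
              ENNReal.ofReal (α n)) := by
          rw [hIoo]
          gcongr
      _ = ENNReal.ofReal (∑ i ∈ Finset.range (j + 1), 2 ^ i * α (n + i)) := by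
          rw [hsum_eq, ENNReal.ofReal_add hT' (add_nonneg hT' (hpos n).le),
            ENNReal.ofReal_add hT' (hpos n).le]

lemma partial_le (α : ℕ → ℝ) (hpos : ∀ n, 0 < α n)
    (hsum : Summable fun n => (2 : ℝ) ^ n * α n) (n : ℕ) :
    ∑ k ∈ Finset.range n, (2 : ℝ) ^ k * α k ≤ ∑' k, (2 : ℝ) ^ k * α k :=
  Summable.sum_le_tsum _ (fun i _ => (mul_pos (by positivity) (hpos i)).le) hsum

lemma len_nonneg (α : ℕ → ℝ) (hpos : ∀ n, 0 < α n)
    (hsum : Summable fun n => (2 : ℝ) ^ n * α n)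
    (hlt : ∑' n, (2 : ℝ) ^ n * α n < 1) (n : ℕ) (s : Fin n → Bool) :
    0 ≤ (cantorNode α n s).2 - (cantorNode α n s).1 := by
  rw [cantorNode_len]
  have h1 := partial_le α hpos hsum n
  have h2 : (0 : ℝ) ≤ 1 - ∑ k ∈ Finset.range n, 2 ^ k * α k := by linarith
  exact div_nonneg h2 (by positivity)

lemma level_antitone (α : ℕ → ℝ) (hpos : ∀ n, 0 < α n)
    (hsum : Summable fun n => (2 : ℝ) ^ n * α n)
    (hlt : ∑' n, (2 : ℝ) ^ n * α n < 1) : Antitone (level α) := by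
  apply antitone_nat_of_succ_le
  intro n
  refine iUnion_subset fun t => ?_
  have hba := len_nonneg α hpos hsum hlt n (Fin.init t)
  refine subset_iUnion_of_subset (Fin.init t) ?_
  have ht := cantorNode_snoc α n (Fin.init t) (t (Fin.last n))
  rw [Fin.snoc_init_self] at ht
  rw [ht]
  rcases Bool.dichotomy (t (Fin.last n)) with hb | hb <;> rw [hb] <;> simp <;>
    apply Icc_subset_Icc <;> linarith [hpos n, hba]

lemma fatCantor_measurable (α : ℕ → ℝ) : MeasurableSet (fatCantor α) := by
  have : IsClosed (fatCantor α) :=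
    isClosed_iInter fun n => isClosed_iUnion_of_finite fun s => isClosed_Icc
  exact this.measurableSet

lemma node_inter_pos (α : ℕ → ℝ) (hpos : ∀ n, 0 < α n)
    (hsum : Summable fun n => (2 : ℝ) ^ n * α n)
    (hlt : ∑' n, (2 : ℝ) ^ n * α n < 1) (n : ℕ) (s : Fin n → Bool) :
    0 < volume (fatCantor α ∩ Icc (cantorNode α n s).1 (cantorNode α n s).2) := by
  set S := ∑' k, (2 : ℝ) ^ k * α k with hS
  set Sn := ∑ k ∈ Finset.range n, (2 : ℝ) ^ k * α k with hSn
  set a := (cantorNode α n s).1 with ha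
  set b := (cantorNode α n s).2 with hb
  have hSnS : Sn ≤ S := partial_le α hpos hsum n
  have hdiff : volume (Icc a b \ fatCantor α) ≤ ENNReal.ofReal ((S - Sn) / 2 ^ n) := by
    rw [fatCantor_eq, diff_iInter]
    have hmono : Monotone fun m => Icc a b \ level α m := fun i j hij =>
      diff_subset_diff_right (level_antitone α hpos hsum hlt hij)
    rw [hmono.directed_le.measure_iUnion]
    refine iSup_le fun m => ?_
    have h1 : Icc a b \ level α m ⊆ Icc a b \ level α (n + m) :=
      diff_subset_diff_right (level_antitone α hpos hsum hlt (Nat.le_add_left m n))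
    refine (measure_mono h1).trans ((gap_bound α hpos m n s).trans ?_)
    refine ENNReal.ofReal_le_ofReal ?_
    rw [le_div_iff₀ (by positivity : (0:ℝ) < 2 ^ n), mul_comm]
    have key : (2 : ℝ) ^ n * ∑ i ∈ Finset.range m, 2 ^ i * α (n + i)
        = (∑ k ∈ Finset.range (n + m), 2 ^ k * α k) - Sn := by
      rw [Finset.mul_sum]
      have h2 : ∀ i ∈ Finset.range m, (2:ℝ) ^ n * (2 ^ i * α (n + i))
          = 2 ^ (n + i) * α (n + i) := by
        intro i _
        rw [pow_add]; ring
      rw [Finset.sum_congr rfl h2]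
      have h3 : ∑ i ∈ Finset.range m, (2:ℝ) ^ (n + i) * α (n + i)
          = ∑ k ∈ Finset.Ico n (n + m), 2 ^ k * α k := by
        rw [Finset.sum_Ico_eq_sum_range]
        simp
      rw [h3, hSn, Finset.sum_Ico_eq_sub _ (Nat.le_add_right n m)]
    rw [key]
    have := partial_le α hpos hsum (n + m)
    linarith
  have hsplit := measure_inter_add_diff (μ := volume) (Icc a b) (fatCantor_measurable α)
  have hvol : volume (Icc a b) = ENNReal.ofReal ((1 - Sn) / 2 ^ n) := by
    rw [Real.volume_Icc, cantorNode_len]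
  by_contra hcon
  push_neg at hcon
  have hzero : volume (fatCantor α ∩ Icc a b) = 0 := le_antisymm hcon (zero_le)
  rw [inter_comm] at hzero
  rw [hzero, zero_add, hvol] at hsplit
  rw [hsplit] at hdiff
  have hle : (1 - Sn) / 2 ^ n ≤ (S - Sn) / 2 ^ n := by
    rw [ENNReal.ofReal_le_ofReal_iff (div_nonneg (by linarith) (by positivity))] at hdiff
    exact hdiff
  have h2n : (0:ℝ) < 2 ^ n := by positivity
  rw [div_le_div_iff_of_pos_right h2n] at hle
  linarith

end FatCantorAux

theorem fatCantor_quasiDense (α : ℕ → ℝ) (hpos : ∀ n, 0 < α n)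
    (hsum : Summable (fun n => (2 : ℝ) ^ n * α n))
    (hlt : ∑' n, (2 : ℝ) ^ n * α n < 1) :
    ∀ x ∈ fatCantor α, ∀ ε > (0 : ℝ),
      0 < volume (fatCantor α ∩ Set.Ioo (x - ε) (x + ε)) := by
  intro x hx ε hε
  obtain ⟨n, hn⟩ := exists_pow_lt_of_lt_one hε (by norm_num : (1:ℝ)/2 < 1)
  have hxl : x ∈ FatCantorAux.level α n := by
    rw [FatCantorAux.fatCantor_eq] at hx
    exact mem_iInter.1 hx n
  obtain ⟨s, hs⟩ := mem_iUnion.1 hxl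
  set a := (cantorNode α n s).1 with ha
  set b := (cantorNode α n s).2 with hb
  have hlen : b - a ≤ (1/2 : ℝ) ^ n := by
    rw [hb, ha, FatCantorAux.cantorNode_len]
    have hSn : (0:ℝ) ≤ ∑ k ∈ Finset.range n, 2 ^ k * α k :=
      Finset.sum_nonneg fun i _ => (mul_pos (by positivity) (hpos i)).le
    rw [div_pow, one_pow]
    gcongr
    linarith
  have hsub : Set.Icc a b ⊆ Set.Ioo (x - ε) (x + ε) := by
    intro y hy
    have h1 : a ≤ x := hs.1
    have h2 : x ≤ b := hs.2
    constructor
    · have : x - a ≤ b - a := by linarith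
      have : x - a < ε := lt_of_le_of_lt (this.trans hlen) hn
      linarith [hy.1]
    · have : b - x ≤ b - a := by linarith
      have : b - x < ε := lt_of_le_of_lt (this.trans hlen) hn
      linarith [hy.2]
  have key := FatCantorAux.node_inter_pos α hpos hsum hlt n s
  exact lt_of_lt_of_le key (measure_mono (inter_subset_inter_right _ hsub))
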